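/- For infinite-state communicating programs the weakest assumption need not be regular: with data domain D = ℤ, let M1 be the program with states q0 (initial) and q1 (accepting), a transition q0 —sync→ q1 and self-loops on q1 labeled by every letter; let P be the property with states r0 (initial, accepting), r1 (accepting), r2 (accepting), r3 (rejecting), transitions r0 —sync→ r1, r1 —(x=y)→ r2, r1 —(x≠y)→ r3, and self-loops on r2 and r3 labeled by every letter; and let αM2 = {x:=0, y:=0, x:=x+1, y:=y+1, sync}, where sync is a synchronization action common to M1 and the assumption. Then the weakest-assumption language L(A_w) = { w ∈ (αM2)* : M1 || w ⊨ P } is not regular. -/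

import Mathlib

/-!
Communicating programs (Frenkel, Grumberg, Păsăreanu, Sheinvald:
"Assume, Guarantee or Repair").

A communicating program is an automaton over an action alphabet consisting of
communication actions (reads `g?x`, writes `g!x`, and synchronized read/write
pairs), assignments `x := e`, and first-order constraints over valuations of
the program variables.
-/

open scoped Classical

namespace AGR

/-- A single (one-sided) communication action: a read `g?x` or a write `g!x`
of variable `x` over channel `g`. -/
inductive CommAct (Chan Var : Type) where
  | read  : Chan → Var → CommAct Chan Var
  | write : Chan → Var → CommAct Chan Var

namespace CommAct

variable {Chan Var : Type}

/-- The channel of a communication action. -/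
def chan : CommAct Chan Var → Chan
  | read g _ => g
  | write g _ => g

/-- The variable of a communication action. -/
def var : CommAct Chan Var → Var
  | read _ x => x
  | write _ x => x

end CommAct

/-- Two one-sided communication actions form a matching read/write pair:
one is a read and the other is a write, over the same channel. -/
def rwPair {Chan Var : Type} : CommAct Chan Var → CommAct Chan Var → Prop
  | CommAct.read g _, CommAct.write g' _ => g = g'
  | CommAct.write g _, CommAct.read g' _ => g = g'
  | _, _ => False

/-- Letters of the action alphabet of a communicating program over channels
`Chan`, variables `Var` and data domain `D`:
communication actions (single reads/writes and synchronized pairs),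
assignments `x := e`, and constraints (sets of valuations). -/
inductive Action (Chan Var D : Type) where
  | comm   : CommAct Chan Var → Action Chan Var D
  | sync   : CommAct Chan Var → CommAct Chan Var → Action Chan Var D
  | assign : Var → ((Var → D) → D) → Action Chan Var D
  | constr : Set (Var → D) → Action Chan Var D

namespace Action

variable {Chan Var D : Type}

/-- `a` is a communication action (a single read/write or a synchronized pair). -/
def isComm : Action Chan Var D → Prop
  | comm _ => True
  | sync _ _ => True
  | _ => False

/-- `a` is an assignment. -/
def isAssign : Action Chan Var D → Prop
  | assign _ _ => True
  | _ => False

/-- `a` is a constraint. -/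
def isConstraint : Action Chan Var D → Prop
  | constr _ => True
  | _ => False

/-- The channels occurring in an action. -/
def chans : Action Chan Var D → Set Chan
  | comm c => {c.chan}
  | sync c₁ c₂ => {c₁.chan, c₂.chan}
  | _ => ∅

/-- The action refers only to variables in `V`. -/
def usesOnly (V : Set Var) : Action Chan Var D → Prop
  | comm c => c.var ∈ V
  | sync c₁ c₂ => c₁.var ∈ V ∧ c₂.var ∈ V
  | assign x e => x ∈ V ∧ ∀ β β' : Var → D, (∀ y ∈ V, β y = β' y) → e β = e β'
  | constr c => ∀ β β' : Var → D, (∀ y ∈ V, β y = β' y) → (β ∈ c ↔ β' ∈ c)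

/-- The semantics of a single action on valuations:
`a.step β β'` holds when valuation `β'` may follow valuation `β` upon
performing `a`.  A read assigns an arbitrary value to the read variable;
a write changes nothing; a synchronized pair copies the written variable to
the read variable; an assignment updates the assigned variable; a constraint
leaves the valuation unchanged and must be satisfied by it. -/
def step : Action Chan Var D → (Var → D) → (Var → D) → Prop
  | comm (CommAct.read _ x) => fun β β' => ∀ y, y ≠ x → β' y = β y
  | comm (CommAct.write _ _) => fun β β' => β' = β
  | sync (CommAct.read _ x) (CommAct.write _ y) => fun β β' =>
      β' x = β y ∧ ∀ z, z ≠ x → β' z = β z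
  | sync (CommAct.write _ y) (CommAct.read _ x) => fun β β' =>
      β' x = β y ∧ ∀ z, z ≠ x → β' z = β z
  | sync _ _ => fun β β' => β' = β
  | assign x e => fun β β' => β' x = e β ∧ ∀ y, y ≠ x → β' y = β y
  | constr c => fun β β' => β' = β ∧ β ∈ c

end Action

/-- `Exec β t β'` : the trace `t` has an execution starting in valuation `β`
and ending in valuation `β'`. -/
inductive Exec {Chan Var D : Type} :
    (Var → D) → List (Action Chan Var D) → (Var → D) → Prop where
  | nil (β : Var → D) : Exec β [] β
  | cons {β β' β'' : Var → D} {a : Action Chan Var D} {t : List (Action Chan Var D)} :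
      a.step β β' → Exec β' t β'' → Exec β (a :: t) β''

/-- A trace is feasible if it has an execution. -/
def Feasible {Chan Var D : Type} (t : List (Action Chan Var D)) : Prop :=
  ∃ β β' : Var → D, Exec β t β'

/-- Restriction of a single letter to a sub-alphabet `A`: letters in `A` are
kept; a synchronized pair (that is not itself in `A`) whose read or write
component is in `A` is replaced by that component; all other letters are
dropped. -/
noncomputable def restrictLetter {Chan Var D : Type} (A : Set (Action Chan Var D)) :
    Action Chan Var D → Option (Action Chan Var D)
  | Action.sync c₁ c₂ =>
      if Action.sync c₁ c₂ ∈ A then some (Action.sync c₁ c₂)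
      else if Action.comm c₁ ∈ A then some (Action.comm c₁)
      else if Action.comm c₂ ∈ A then some (Action.comm c₂)
      else none
  | a => if a ∈ A then some a else none

/-- The restriction `t↓A` of a trace `t` to a sub-alphabet `A`. -/
noncomputable def restrict {Chan Var D : Type} (A : Set (Action Chan Var D))
    (t : List (Action Chan Var D)) : List (Action Chan Var D) :=
  t.filterMap (restrictLetter A)

/-- A communicating program: states `Q` with an initial state, a transition
relation labeled by actions, a set of accepting states, an action alphabet,
and a set of program variables. -/
structure Program (Q Chan Var D : Type) where
  init : Q
  tr : Q → Action Chan Var D → Q → Prop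
  acc : Set Q
  alph : Set (Action Chan Var D)
  vars : Set Var

namespace Program

variable {Q Chan Var D : Type}

/-- Well-formedness of a communicating program: transitions are labeled by
alphabet letters, alphabet letters refer only to the program variables, and
the alphabet and the variable set are finite. -/
def Good (M : Program Q Chan Var D) : Prop :=
  (∀ q a q', M.tr q a q' → a ∈ M.alph) ∧
  (∀ a ∈ M.alph, a.usesOnly M.vars) ∧
  M.alph.Finite ∧ M.vars.Finite

/-- `M.Reach q t` : there is a run of `M` from the initial state to `q`
whose induced trace is `t`. -/
inductive Reach (M : Program Q Chan Var D) : Q → List (Action Chan Var D) → Prop where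
  | nil : Reach M M.init []
  | snoc {q : Q} {t : List (Action Chan Var D)} {a : Action Chan Var D} {q' : Q} :
      Reach M q t → M.tr q a q' → Reach M q' (t ++ [a])

/-- `t` is a trace of `M` (induced by some run of `M`). -/
def IsTrace (M : Program Q Chan Var D) (t : List (Action Chan Var D)) : Prop :=
  ∃ q : Q, M.Reach q t

/-- `T(M)`: the set of accepted traces of `M`. -/
def AccTraces (M : Program Q Chan Var D) : Set (List (Action Chan Var D)) :=
  {t | ∃ q ∈ M.acc, M.Reach q t}

/-- The set of channels occurring in actions of `M`. -/
def channels (M : Program Q Chan Var D) : Set Chan :=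
  ⋃ a ∈ M.alph, a.chans

end Program

/-- The interface alphabet of `M₁` and `M₂`: all single communication actions
over channels common to both components. -/
def interface {Q₁ Q₂ Chan Var D : Type}
    (M₁ : Program Q₁ Chan Var D) (M₂ : Program Q₂ Chan Var D) :
    Set (Action Chan Var D) :=
  {a | ∃ c : CommAct Chan Var, a = Action.comm c ∧
      c.chan ∈ M₁.channels ∧ c.chan ∈ M₂.channels}

/-- Transitions of the parallel composition `M₁ ‖ M₂`.  The two components
synchronize on matching read/write interface actions (moving through an
intermediate primed state from which the equality constraint between the two
involved variables is taken), and interleave on all other actions. -/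
inductive ParTrans {Q₁ Q₂ Chan Var D : Type}
    (M₁ : Program Q₁ Chan Var D) (M₂ : Program Q₂ Chan Var D) :
    ((Q₁ × Q₂) ⊕ (Q₁ × Q₂ × Var × Var)) → Action Chan Var D →
    ((Q₁ × Q₂) ⊕ (Q₁ × Q₂ × Var × Var)) → Prop where
  | sync {q₁ p₁ : Q₁} {q₂ p₂ : Q₂} {c₁ c₂ : CommAct Chan Var} :
      Action.comm c₁ ∈ M₁.alph → Action.comm c₁ ∈ interface M₁ M₂ →
      Action.comm c₂ ∈ M₂.alph → Action.comm c₂ ∈ interface M₁ M₂ →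
      rwPair c₁ c₂ →
      M₁.tr q₁ (Action.comm c₁) p₁ → M₂.tr q₂ (Action.comm c₂) p₂ →
      ParTrans M₁ M₂ (Sum.inl (q₁, q₂)) (Action.sync c₁ c₂)
        (Sum.inr (p₁, p₂, c₁.var, c₂.var))
  | eqc {p₁ : Q₁} {p₂ : Q₂} {x₁ x₂ : Var} :
      ParTrans M₁ M₂ (Sum.inr (p₁, p₂, x₁, x₂))
        (Action.constr {β | β x₁ = β x₂}) (Sum.inl (p₁, p₂))
  | left {q₁ p₁ : Q₁} {q₂ : Q₂} {a : Action Chan Var D} :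
      a ∈ M₁.alph → a ∉ interface M₁ M₂ → M₁.tr q₁ a p₁ →
      ParTrans M₁ M₂ (Sum.inl (q₁, q₂)) a (Sum.inl (p₁, q₂))
  | right {q₁ : Q₁} {q₂ p₂ : Q₂} {a : Action Chan Var D} :
      a ∈ M₂.alph → a ∉ interface M₁ M₂ → M₂.tr q₂ a p₂ →
      ParTrans M₁ M₂ (Sum.inl (q₁, q₂)) a (Sum.inl (q₁, p₂))

/-- The parallel composition `M₁ ‖ M₂` of two communicating programs. -/
def parallel {Q₁ Q₂ Chan Var D : Type}
    (M₁ : Program Q₁ Chan Var D) (M₂ : Program Q₂ Chan Var D) :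
    Program ((Q₁ × Q₂) ⊕ (Q₁ × Q₂ × Var × Var)) Chan Var D where
  init := Sum.inl (M₁.init, M₂.init)
  tr := ParTrans M₁ M₂
  acc := {s | ∃ q₁ ∈ M₁.acc, ∃ q₂ ∈ M₂.acc, s = Sum.inl (q₁, q₂)}
  alph :=
    {a | ∃ c₁ c₂ : CommAct Chan Var, a = Action.sync c₁ c₂ ∧
        Action.comm c₁ ∈ M₁.alph ∧ Action.comm c₁ ∈ interface M₁ M₂ ∧
        Action.comm c₂ ∈ M₂.alph ∧ Action.comm c₂ ∈ interface M₁ M₂ ∧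
        rwPair c₁ c₂}
    ∪ ((M₁.alph ∪ M₂.alph) \ interface M₁ M₂)
    ∪ {a | ∃ x₁ ∈ M₁.vars, ∃ x₂ ∈ M₂.vars, a = Action.constr {β | β x₁ = β x₂}}
  vars := M₁.vars ∪ M₂.vars

/-- The interface of `M` and a property `P`: the communication actions common
to both alphabets. -/
def cInterface {QM QP Chan Var D : Type}
    (M : Program QM Chan Var D) (P : Program QP Chan Var D) :
    Set (Action Chan Var D) :=
  {a | a.isComm ∧ a ∈ M.alph ∧ a ∈ P.alph}

/-- Transitions of the conjunctive composition `M × P`: the components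
synchronize on common communication actions and interleave on all other
actions. -/
inductive ConjTrans {QM QP Chan Var D : Type}
    (M : Program QM Chan Var D) (P : Program QP Chan Var D) :
    QM × QP → Action Chan Var D → QM × QP → Prop where
  | sync {q₁ p₁ : QM} {q₂ p₂ : QP} {a : Action Chan Var D} :
      a ∈ cInterface M P → M.tr q₁ a p₁ → P.tr q₂ a p₂ →
      ConjTrans M P (q₁, q₂) a (p₁, p₂)
  | left {q₁ p₁ : QM} {q₂ : QP} {a : Action Chan Var D} :
      a ∈ M.alph → a ∉ cInterface M P → M.tr q₁ a p₁ →
      ConjTrans M P (q₁, q₂) a (p₁, q₂)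
  | right {q₁ : QM} {q₂ p₂ : QP} {a : Action Chan Var D} :
      a ∈ P.alph → a ∉ cInterface M P → P.tr q₂ a p₂ →
      ConjTrans M P (q₁, q₂) a (q₁, p₂)

/-- The conjunctive composition `M × P` of a program and a property; its
accepting states are pairs of an accepting state of `M` and a rejecting
(non-accepting) state of `P`. -/
def conj {QM QP Chan Var D : Type}
    (M : Program QM Chan Var D) (P : Program QP Chan Var D) :
    Program (QM × QP) Chan Var D where
  init := (M.init, P.init)
  tr := ConjTrans M P
  acc := {s | s.1 ∈ M.acc ∧ s.2 ∉ P.acc}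
  alph := M.alph ∪ P.alph
  vars := M.vars

/-- `P` is a property: a deterministic and complete communicating program
without assignment actions.  Semantic determinism: distinct constraints
leaving a state towards distinct successors are mutually contradictory.
Semantic completeness: whenever some constraint leaves a state, the
constraints leaving that state cover all valuations. -/
structure IsProperty {Q Chan Var D : Type} (P : Program Q Chan Var D) : Prop where
  no_assign : ∀ a ∈ P.alph, ¬ a.isAssign
  complete : ∀ q : Q, ∀ a ∈ P.alph, ∃ q' : Q, P.tr q a q'
  deterministic : ∀ (q : Q) (a : Action Chan Var D) (q' q'' : Q),
      P.tr q a q' → P.tr q a q'' → q' = q''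
  sem_det : ∀ (q : Q) (c₁ c₂ : Set (Var → D)) (q' q'' : Q),
      P.tr q (Action.constr c₁) q' → P.tr q (Action.constr c₂) q'' →
      c₁ ≠ c₂ → q' ≠ q'' → c₁ ∩ c₂ = ∅
  sem_complete : ∀ q : Q, (∃ (c : Set (Var → D)) (q' : Q), P.tr q (Action.constr c) q') →
      ∀ β : Var → D, ∃ (c : Set (Var → D)) (q' : Q), P.tr q (Action.constr c) q' ∧ β ∈ c

/-- `M ⊨ P` : the conjunctive composition `M × P` has no feasible accepted
trace. -/
def Sat {QM QP Chan Var D : Type}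
    (M : Program QM Chan Var D) (P : Program QP Chan Var D) : Prop :=
  ∀ t ∈ (conj M P).AccTraces, ¬ Feasible t

/-- `M_w`: the communicating program that follows exactly the trace `w` and
has no other transitions. -/
def traceProgram {Chan Var D : Type} (w : List (Action Chan Var D)) :
    Program (Fin (w.length + 1)) Chan Var D where
  init := 0
  tr := fun i a j => ∃ h : (i : ℕ) < w.length, a = w.get ⟨(i : ℕ), h⟩ ∧ (j : ℕ) = (i : ℕ) + 1
  acc := {Fin.last w.length}
  alph := {a | a ∈ w}
  vars := Set.univ

/-- A language of finite words is regular if it is the language of some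
finite (deterministic) automaton. -/
def IsRegularLang {A : Type} (L : Set (List A)) : Prop :=
  ∃ (σ : Type) (_ : Fintype σ) (M : DFA A σ), ∀ w : List A, w ∈ M.accepts ↔ w ∈ L


/-! The concrete example of a non-regular weakest assumption:
data domain `ℤ`, a single channel (`Unit`), and three variables
`x, y` (of `M₂`) and `z` (of `M₁`). -/

/-- The variables of the example: `x` and `y` belong to `M₂`,
and `z` belongs to `M₁`. -/
inductive V3 : Type
  | x | y | z
deriving DecidableEq

/-- The actions of the example. -/
abbrev Act6 : Type := Action Unit V3 ℤ

/-- The `sync` action on the side of `M₁`: a read over the common channel. -/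
def syncM1 : Act6 := Action.comm (CommAct.read () V3.z)

/-- The `sync` action on the side of `M₂` (and of the assumption):
a write over the common channel. -/
def syncM2 : Act6 := Action.comm (CommAct.write () V3.y)

/-- The synchronized `sync` pair, as it occurs in the parallel composition
and in the property `P`. -/
def syncPair : Act6 := Action.sync (CommAct.read () V3.z) (CommAct.write () V3.y)

/-- The constraint `x = y`. -/
def eqC : Set (V3 → ℤ) := {β | β V3.x = β V3.y}

/-- The constraint `x ≠ y`. -/
def neqC : Set (V3 → ℤ) := {β | β V3.x ≠ β V3.y}

/-- The program `M₁`: states `q₀ = false` (initial) and `q₁ = true`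
(accepting); a transition `q₀ —sync→ q₁` and self-loops on `q₁` labeled by
every letter of its alphabet. -/
def M1ex : Program Bool Unit V3 ℤ where
  init := false
  tr := fun _ a q' => a = syncM1 ∧ q' = true
  acc := {true}
  alph := {syncM1}
  vars := {V3.z}

/-- The alphabet of the property `P`. -/
def PexAlph : Set Act6 := {syncPair, Action.constr eqC, Action.constr neqC}

/-- The property `P`: states `r₀ = 0` (initial, accepting), `r₁ = 1`
(accepting), `r₂ = 2` (accepting), `r₃ = 3` (rejecting); transitions
`r₀ —sync→ r₁`, `r₁ —(x=y)→ r₂`, `r₁ —(x≠y)→ r₃`, and self-loops on `r₂` and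
`r₃` labeled by every letter of its alphabet. -/
def Pex : Program (Fin 4) Unit V3 ℤ where
  init := 0
  tr := fun q a q' =>
    (q = 0 ∧ a = syncPair ∧ q' = 1) ∨
    (q = 1 ∧ a = Action.constr eqC ∧ q' = 2) ∨
    (q = 1 ∧ a = Action.constr neqC ∧ q' = 3) ∨
    (q = 2 ∧ a ∈ PexAlph ∧ q' = 2) ∨
    (q = 3 ∧ a ∈ PexAlph ∧ q' = 3)
  acc := {0, 1, 2}
  vars := Set.univ
  alph := PexAlph

/-- The assignment `x := 0`. -/
def zeroX : Act6 := Action.assign V3.x (fun _ => 0)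

/-- The assignment `y := 0`. -/
def zeroY : Act6 := Action.assign V3.y (fun _ => 0)

/-- The assignment `x := x + 1`. -/
def incX : Act6 := Action.assign V3.x (fun β => β V3.x + 1)

/-- The assignment `y := y + 1`. -/
def incY : Act6 := Action.assign V3.y (fun β => β V3.y + 1)

/-- The alphabet `αM₂ = {x:=0, y:=0, x:=x+1, y:=y+1, sync}`. -/
def alphaM2 : Set Act6 := {zeroX, zeroY, incX, incY, syncM2}

/-! ### Auxiliary lemmas for the non-regularity proof -/

section ExecLemmas

variable {Chan Var D : Type}

lemma exec_append {s t : List (Action Chan Var D)} {β β'' : Var → D} :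
    Exec β (s ++ t) β'' ↔ ∃ γ, Exec β s γ ∧ Exec γ t β'' := by
  constructor
  · induction s generalizing β with
    | nil => intro h; exact ⟨β, Exec.nil β, h⟩
    | cons a s ih =>
      intro h
      cases h with
      | cons hstep hrest =>
        obtain ⟨γ, h1, h2⟩ := ih hrest
        exact ⟨γ, Exec.cons hstep h1, h2⟩
  · rintro ⟨γ, h1, h2⟩
    induction h1 with
    | nil => exact h2
    | cons hstep _ ih => exact Exec.cons hstep (ih h2)

lemma exec_singleton {a : Action Chan Var D} {β β' : Var → D} :
    Exec β [a] β' ↔ a.step β β' := by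
  constructor
  · intro h; cases h with
    | cons hstep hrest => cases hrest; exact hstep
  · intro h; exact Exec.cons h (Exec.nil β')

lemma exec_nil {β β' : Var → D} (h : Exec β ([] : List (Action Chan Var D)) β') : β' = β := by
  cases h; rfl

lemma not_feasible_append {s t : List (Action Chan Var D)} (h : ¬ Feasible s) :
    ¬ Feasible (s ++ t) := by
  rintro ⟨β, β', he⟩
  obtain ⟨γ, h1, _⟩ := exec_append.mp he
  exact h ⟨β, γ, h1⟩

end ExecLemmas

/-! ### Facts about the concrete actions -/

lemma step_assign {x : V3} {e : (V3 → ℤ) → ℤ} {β β' : V3 → ℤ} :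
    (Action.assign x e : Act6).step β β' ↔ β' x = e β ∧ ∀ y, y ≠ x → β' y = β y :=
  Iff.rfl

lemma step_constr {c : Set (V3 → ℤ)} {β β' : V3 → ℤ} :
    (Action.constr c : Act6).step β β' ↔ β' = β ∧ β ∈ c :=
  Iff.rfl

lemma step_syncPair {β β' : V3 → ℤ} :
    syncPair.step β β' ↔ β' V3.z = β V3.y ∧ ∀ v, v ≠ V3.z → β' v = β v :=
  Iff.rfl

lemma eqC_ne_neqC : eqC ≠ neqC := by
  intro h
  have h0 : (fun _ => (0:ℤ)) ∈ eqC := rfl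
  rw [h] at h0
  exact h0 rfl

/-- The words we use. -/
def uList (m n : ℕ) : List Act6 :=
  zeroX :: zeroY :: (List.replicate m incX ++ List.replicate n incY)

def wOf (u : List Act6) : List Act6 := u ++ [syncM2]

lemma wOf_length (u : List Act6) : (wOf u).length = u.length + 1 := by
  simp [wOf]

/-- `u` consists only of the four assignment letters. -/
def OnlyAssign (u : List Act6) : Prop :=
  ∀ a ∈ u, a = zeroX ∨ a = zeroY ∨ a = incX ∨ a = incY

lemma onlyAssign_uList (m n : ℕ) : OnlyAssign (uList m n) := by
  intro a ha
  simp only [uList, List.mem_cons, List.mem_append, List.mem_replicate] at ha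
  rcases ha with h | h | (⟨_, h⟩ | ⟨_, h⟩) <;> simp [h]

lemma onlyAssign_not_comm {u : List Act6} (hu : OnlyAssign u) {a : Act6} (ha : a ∈ u) :
    ∀ c : CommAct Unit V3, a ≠ Action.comm c := by
  intro c h
  rcases hu a ha with h' | h' | h' | h' <;>
    (rw [h'] at h; simp [zeroX, zeroY, incX, incY] at h)

lemma wOf_get_cases {u : List Act6} {i : ℕ} (h : i < (wOf u).length) :
    ((wOf u).get ⟨i, h⟩ ∈ u ∧ i < u.length) ∨ (i = u.length ∧ (wOf u).get ⟨i, h⟩ = syncM2) := by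
  rcases lt_or_ge i u.length with hi | hi
  · left
    constructor
    · have : (wOf u).get ⟨i, h⟩ = u.get ⟨i, hi⟩ := by
        simp only [wOf, List.get_eq_getElem]
        exact List.getElem_append_left hi
      rw [this]; exact List.get_mem _ _
    · exact hi
  · right
    have hlen : i = u.length := by
      have := wOf_length u; omega
    refine ⟨hlen, ?_⟩
    simp only [wOf, List.get_eq_getElem]
    exact List.getElem_concat_length hlen _
set_option linter.constructorNameAsVariable false

/-! ### Arithmetic facts about executions of the assignment prefix -/

lemma exec_replicate_incX {k : ℕ} {β β' : V3 → ℤ}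
    (h : Exec β (List.replicate k incX) β') :
    β' V3.x = β V3.x + k ∧ β' V3.y = β V3.y ∧ β' V3.z = β V3.z := by
  induction k generalizing β with
  | zero => simp [exec_nil h]
  | succ k ih =>
    rw [List.replicate_succ] at h
    cases h with
    | cons hstep hrest =>
      obtain ⟨hx, hoth⟩ := (step_assign).mp hstep
      obtain ⟨ih1, ih2, ih3⟩ := ih hrest
      refine ⟨?_, ?_, ?_⟩
      · rw [ih1, hx]; push_cast; ring
      · rw [ih2, hoth V3.y (by simp)]
      · rw [ih3, hoth V3.z (by simp)]

lemma exec_replicate_incY {k : ℕ} {β β' : V3 → ℤ}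
    (h : Exec β (List.replicate k incY) β') :
    β' V3.x = β V3.x ∧ β' V3.y = β V3.y + k ∧ β' V3.z = β V3.z := by
  induction k generalizing β with
  | zero => simp [exec_nil h]
  | succ k ih =>
    rw [List.replicate_succ] at h
    cases h with
    | cons hstep hrest =>
      obtain ⟨hy, hoth⟩ := (step_assign).mp hstep
      obtain ⟨ih1, ih2, ih3⟩ := ih hrest
      refine ⟨?_, ?_, ?_⟩
      · rw [ih1, hoth V3.x (by simp)]
      · rw [ih2, hy]; push_cast; ring
      · rw [ih3, hoth V3.z (by simp)]

lemma exec_uList {m n : ℕ} {β β' : V3 → ℤ} (h : Exec β (uList m n) β') :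
    β' V3.x = (m : ℤ) ∧ β' V3.y = (n : ℤ) := by
  cases h with
  | cons hstep1 h =>
  cases h with
  | cons hstep2 h =>
    obtain ⟨γ, hX, hY⟩ := exec_append.mp h
    obtain ⟨hx1, hoth1⟩ := (step_assign).mp hstep1
    obtain ⟨hy2, hoth2⟩ := (step_assign).mp hstep2
    obtain ⟨hX1, hX2, _⟩ := exec_replicate_incX hX
    obtain ⟨hY1, hY2, _⟩ := exec_replicate_incY hY
    constructor
    · rw [hY1, hX1, hoth2 V3.x (by simp), hx1]; ring
    · rw [hY2, hX2, hy2]; ring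

lemma exec_uList_xy {n : ℕ} {β β' : V3 → ℤ} (h : Exec β (uList n n) β') :
    β' V3.x = β' V3.y := by
  obtain ⟨h1, h2⟩ := exec_uList h
  rw [h1, h2]

lemma exec_exists_replicate_incX (k : ℕ) : ∀ β : V3 → ℤ, ∃ β', Exec β (List.replicate k incX) β' := by
  induction k with
  | zero => intro β; exact ⟨β, Exec.nil β⟩
  | succ k ih =>
    intro β
    obtain ⟨β', h⟩ := ih (Function.update β V3.x (β V3.x + 1))
    refine ⟨β', ?_⟩
    rw [List.replicate_succ]
    refine Exec.cons (step_assign.mpr ⟨?_, ?_⟩) h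
    · simp
    · intro y hy; simp [Function.update_of_ne hy]

lemma exec_exists_replicate_incY (k : ℕ) : ∀ β : V3 → ℤ, ∃ β', Exec β (List.replicate k incY) β' := by
  induction k with
  | zero => intro β; exact ⟨β, Exec.nil β⟩
  | succ k ih =>
    intro β
    obtain ⟨β', h⟩ := ih (Function.update β V3.y (β V3.y + 1))
    refine ⟨β', ?_⟩
    rw [List.replicate_succ]
    refine Exec.cons (step_assign.mpr ⟨?_, ?_⟩) h
    · simp
    · intro y hy; simp [Function.update_of_ne hy]

lemma exec_exists_uList (m n : ℕ) (β : V3 → ℤ) : ∃ β', Exec β (uList m n) β' := by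
  set β₁ := Function.update β V3.x 0 with hβ₁
  set β₂ := Function.update β₁ V3.y 0 with hβ₂
  obtain ⟨γ, hX⟩ := exec_exists_replicate_incX m β₂
  obtain ⟨β', hY⟩ := exec_exists_replicate_incY n γ
  refine ⟨β', Exec.cons (β' := β₁) (step_assign.mpr ⟨?_, ?_⟩)
    (Exec.cons (β' := β₂) (step_assign.mpr ⟨?_, ?_⟩) (exec_append.mpr ⟨γ, hX, hY⟩))⟩
  · simp [hβ₁]
  · intro y hy; simp [hβ₁, Function.update_of_ne hy]
  · simp [hβ₂]
  · intro y hy; simp [hβ₂, Function.update_of_ne hy]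
/-! ### Alphabet and interface facts -/

section Alph

variable {u : List Act6}

lemma syncM2_mem_wOf : syncM2 ∈ wOf u := by simp [wOf]

lemma M1_channels : () ∈ M1ex.channels := by
  simp only [Program.channels, Set.mem_iUnion]
  exact ⟨syncM1, rfl, rfl⟩

lemma Mw_channels : () ∈ (traceProgram (wOf u)).channels := by
  simp only [Program.channels, Set.mem_iUnion]
  exact ⟨syncM2, syncM2_mem_wOf, rfl⟩

lemma comm_mem_interface (c : CommAct Unit V3) :
    Action.comm c ∈ interface M1ex (traceProgram (wOf u)) :=
  ⟨c, rfl, M1_channels, Mw_channels⟩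

lemma mem_interface_comm {a : Act6} (h : a ∈ interface M1ex (traceProgram (wOf u))) :
    ∃ c, a = Action.comm c := by
  obtain ⟨c, hc, -, -⟩ := h
  exact ⟨c, hc⟩

lemma assign_not_mem_interface {x : V3} {e : (V3 → ℤ) → ℤ} :
    (Action.assign x e : Act6) ∉ interface M1ex (traceProgram (wOf u)) := by
  intro h
  obtain ⟨c, hc⟩ := mem_interface_comm h
  cases hc

lemma constr_not_mem_interface {c : Set (V3 → ℤ)} :
    (Action.constr c : Act6) ∉ interface M1ex (traceProgram (wOf u)) := by
  intro h
  obtain ⟨c', hc⟩ := mem_interface_comm h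
  cases hc

lemma mem_PexAlph_iff {a : Act6} :
    a ∈ Pex.alph ↔ a = syncPair ∨ a = Action.constr eqC ∨ a = Action.constr neqC := by
  simp [Pex, PexAlph, Set.mem_insert_iff]

lemma syncPair_mem_Par_alph : syncPair ∈ (parallel M1ex (traceProgram (wOf u))).alph := by
  refine Or.inl (Or.inl ?_)
  refine ⟨CommAct.read () V3.z, CommAct.write () V3.y, rfl, rfl, comm_mem_interface _,
    syncM2_mem_wOf, comm_mem_interface _, ?_⟩
  exact rfl

lemma mem_cInterface_iff {a : Act6} :
    a ∈ cInterface (parallel M1ex (traceProgram (wOf u))) Pex ↔ a = syncPair := by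
  constructor
  · rintro ⟨hcomm, -, hP⟩
    rcases mem_PexAlph_iff.mp hP with h | h | h
    · exact h
    all_goals (rw [h] at hcomm; exact absurd hcomm (by simp [Action.isComm]))
  · rintro rfl
    exact ⟨trivial, syncPair_mem_Par_alph, Or.inl rfl⟩

lemma constr_not_mem_cInterface {c : Set (V3 → ℤ)} :
    (Action.constr c : Act6) ∉ cInterface (parallel M1ex (traceProgram (wOf u))) Pex := by
  intro h
  cases mem_cInterface_iff.mp h

lemma assign_not_mem_cInterface {x : V3} {e : (V3 → ℤ) → ℤ} :
    (Action.assign x e : Act6) ∉ cInterface (parallel M1ex (traceProgram (wOf u))) Pex := by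
  intro h
  cases mem_cInterface_iff.mp h

lemma assign_mem_Par_alph {a : Act6} (ha : a ∈ wOf u) (hx : ∃ x e, a = Action.assign x e) :
    a ∈ (parallel M1ex (traceProgram (wOf u))).alph := by
  refine Or.inl (Or.inr ⟨Or.inr ha, ?_⟩)
  obtain ⟨x, e, rfl⟩ := hx
  exact assign_not_mem_interface

lemma zy_constr_mem_Par_alph :
    (Action.constr {β : V3 → ℤ | β V3.z = β V3.y} : Act6) ∈
      (parallel M1ex (traceProgram (wOf u))).alph :=
  Or.inr ⟨V3.z, rfl, V3.y, trivial, rfl⟩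

lemma syncPair_not_mem_wOf (hu : OnlyAssign u) : syncPair ∉ wOf u := by
  intro h
  simp only [wOf, List.mem_append, List.mem_singleton] at h
  rcases h with h | h
  · rcases hu _ h with h' | h' | h' | h' <;> simp [zeroX, zeroY, incX, incY, syncPair] at h'
  · simp [syncM2, syncPair] at h

lemma mem_wOf_comm {c : CommAct Unit V3} (hu : OnlyAssign u)
    (h : Action.comm c ∈ wOf u) : (Action.comm c : Act6) = syncM2 := by
  simp only [wOf, List.mem_append, List.mem_singleton] at h
  rcases h with h | h
  · exact absurd rfl (onlyAssign_not_comm hu h c)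
  · exact h

end Alph
/-! ### The reachability invariant for the conjunctive composition -/

lemma Pex_tr_iff {q q' : Fin 4} {a : Act6} :
    Pex.tr q a q' ↔
      ((q = 0 ∧ a = syncPair ∧ q' = 1) ∨
       (q = 1 ∧ a = Action.constr eqC ∧ q' = 2) ∨
       (q = 1 ∧ a = Action.constr neqC ∧ q' = 3) ∨
       (q = 2 ∧ a ∈ PexAlph ∧ q' = 2) ∨
       (q = 3 ∧ a ∈ PexAlph ∧ q' = 3)) := Iff.rfl

section Invariant

variable (u : List Act6)

/-- Invariant of the reachable configurations of `(M₁ ‖ M_w) × P` for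
`w = u ++ [sync]`. -/
def Inv (s : (((Bool × Fin ((wOf u).length + 1)) ⊕
      (Bool × Fin ((wOf u).length + 1) × V3 × V3)) × Fin 4)) (t : List Act6) : Prop :=
  (s.2 = 0 → ∃ (b : Bool) (i : Fin ((wOf u).length + 1)), s.1 = Sum.inl (b, i) ∧
      (i : ℕ) ≤ u.length ∧ t = (wOf u).take i) ∧
  (s.2 ≠ 0 → s.1 = Sum.inr (true, Fin.last _, V3.z, V3.y) ∨
      s.1 = Sum.inl (true, Fin.last _)) ∧
  ((s.2 = 1 ∨ s.2 = 2) → ∀ β β' : V3 → ℤ, Exec β t β' → β' V3.x = β' V3.y) ∧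
  (s.2 = 3 → ¬ Feasible t)

variable {u}

theorem reach_inv (hu : OnlyAssign u)
    (hxy : ∀ β β' : V3 → ℤ, Exec β u β' → β' V3.x = β' V3.y)
    {s t} (h : (conj (parallel M1ex (traceProgram (wOf u))) Pex).Reach s t) :
    Inv u s t := by
  induction h with
  | nil =>
    have hinit : (conj (parallel M1ex (traceProgram (wOf u))) Pex).init
        = (Sum.inl (false, 0), (0 : Fin 4)) := rfl
    rw [hinit]
    refine ⟨fun _ => ⟨false, 0, rfl, by simp, by simp⟩, fun h => absurd rfl h, ?_, ?_⟩
    · rintro (h | h) <;> simp at h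
    · intro h; simp at h
  | @snoc s t a s' hr htr ih =>
    obtain ⟨ih0, ihS, ihE, ihF⟩ := ih
    cases htr with
    | @sync q₁ p₁ q₂ p₂ a hci hM hP =>
      have ha : a = syncPair := mem_cInterface_iff.mp hci
      subst ha
      cases hM with
      | sync h₁ h₂ h₃ h₄ h₅ h₆ h₇ =>
        rename_i b bp i j
        have hbp : bp = true := h₆.2
        subst hbp
        obtain ⟨hlt, hget, hj⟩ := h₇
        rcases Pex_tr_iff.mp hP with ⟨hq, hA, hp⟩ | ⟨hq, hA, hp⟩ | ⟨hq, hA, hp⟩ |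
            ⟨hq, hA, hp⟩ | ⟨hq, hA, hp⟩
        · -- q₂ = 0 : the genuine sync
          subst hq hp
          obtain ⟨b', i', hsl, hile, ht⟩ := ih0 rfl
          simp only [Sum.inl.injEq, Prod.mk.injEq] at hsl
          obtain ⟨hb', hi'⟩ := hsl
          subst hi'
          have hiu : (i : ℕ) = u.length := by
            rcases wOf_get_cases hlt with ⟨hmem, _⟩ | ⟨hiu, _⟩
            · rw [← hget] at hmem
              exact absurd rfl (onlyAssign_not_comm hu hmem _)
            · exact hiu
          have htu : t = u := by rw [ht, hiu]; exact List.take_left' rfl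
          have hj' : j = Fin.last (wOf u).length := by
            apply Fin.ext
            rw [hj, hiu, Fin.val_last, wOf_length]
          subst hj' htu
          refine ⟨fun h => absurd h (by simp), fun _ => Or.inl rfl, ?_,
            fun h => absurd h (by simp)⟩
          intro _ β β' hex
          obtain ⟨γ, hu', hs⟩ := exec_append.mp hex
          obtain ⟨hz, hoth⟩ := step_syncPair.mp (exec_singleton.mp hs)
          rw [hoth V3.x (by simp), hoth V3.y (by simp)]
          exact hxy _ _ hu'
        · exact absurd hA (by simp [syncPair])
        · exact absurd hA (by simp [syncPair])
        · -- q₂ = 2 : impossible, the word index is already at the end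
          subst hq
          rcases ihS (by simp) with h | h
          · exact absurd h (by simp)
          · simp only [Sum.inl.injEq, Prod.mk.injEq] at h
            rw [h.2, Fin.val_last] at hlt
            omega
        · subst hq
          rcases ihS (by simp) with h | h
          · exact absurd h (by simp)
          · simp only [Sum.inl.injEq, Prod.mk.injEq] at h
            rw [h.2, Fin.val_last] at hlt
            omega
      | left h₁ h₂ h₃ =>
        have hx : syncPair = syncM1 := h₁
        simp [syncPair, syncM1] at hx
      | right h₁ h₂ h₃ =>
        obtain ⟨hlt, hget, -⟩ := h₃
        exact absurd (hget ▸ List.get_mem _ _) (syncPair_not_mem_wOf hu)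
    | @left q₁ p₁ q₂ a hMa hnci hM =>
      cases hM with
      | sync h₁ h₂ h₃ h₄ h₅ h₆ h₇ =>
        rename_i b bp i j c₁ c₂
        have hc₁ : Action.comm c₁ = syncM1 := h₁
        obtain ⟨hlt, hget, hj⟩ := h₇
        have hc₂ : Action.comm c₂ = syncM2 := by
          apply mem_wOf_comm hu
          rw [hget]
          exact List.get_mem _ _
        simp only [syncM1, Action.comm.injEq] at hc₁
        simp only [syncM2, Action.comm.injEq] at hc₂
        subst hc₁ hc₂
        exact absurd (mem_cInterface_iff.mpr rfl) hnci
      | eqc =>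
        rename_i bp1 bp2 x₁ x₂
        have hq : q₂ ≠ 0 := by
          intro hq
          obtain ⟨b', i', hsl, -, -⟩ := ih0 hq
          simp at hsl
        rcases ihS hq with h | h
        · simp only [Sum.inr.injEq, Prod.mk.injEq] at h
          obtain ⟨h1, h2, h3, h4⟩ := h
          subst h1 h2 h3 h4
          refine ⟨fun h => absurd h hq, fun _ => Or.inr rfl, ?_, ?_⟩
          · intro hq12 β β' hex
            obtain ⟨γ, h1, h2⟩ := exec_append.mp hex
            obtain ⟨rfl, -⟩ := step_constr.mp (exec_singleton.mp h2)
            exact ihE hq12 _ _ h1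
          · intro h3'
            exact not_feasible_append (ihF h3')
        · exact absurd h (by simp)
      | left h₁ h₂ h₃ =>
        have : a = syncM1 := h₁
        subst this
        exact absurd (comm_mem_interface _) h₂
      | right h₁ h₂ h₃ =>
        rename_i b i j
        obtain ⟨hlt, hget, hj⟩ := h₃
        have hau : a ∈ u ∧ (i : ℕ) < u.length := by
          rcases wOf_get_cases hlt with ⟨hmem, hlt'⟩ | ⟨-, hsy⟩
          · exact ⟨hget ▸ hmem, hlt'⟩
          · rw [hget, hsy] at h₂
            exact absurd (comm_mem_interface _) h₂
        by_cases hq : q₂ = 0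
        · subst hq
          obtain ⟨b', i', hsl, hile, ht⟩ := ih0 rfl
          simp only [Sum.inl.injEq, Prod.mk.injEq] at hsl
          obtain ⟨hb', hi'⟩ := hsl
          subst hi'
          refine ⟨fun _ => ⟨b, j, rfl, by omega, ?_⟩, fun h => absurd rfl h, ?_, ?_⟩
          · rw [ht, hget, hj, List.get_eq_getElem]
            exact List.take_concat_get' _ _ hlt
          · rintro (h | h) <;> simp at h
          · intro h; simp at h
        · rcases ihS hq with h | h
          · exact absurd h (by simp)
          · simp only [Sum.inl.injEq, Prod.mk.injEq] at h
            rw [h.2, Fin.val_last] at hlt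
            omega
    | @right q₁ q₂ p₂ a hPa hnci hP =>
      have hane : a ≠ syncPair := fun h => hnci (mem_cInterface_iff.mpr h)
      have hq0 : q₂ ≠ 0 := by
        intro hq
        rcases Pex_tr_iff.mp hP with ⟨hq', hA, -⟩ | ⟨hq', -⟩ | ⟨hq', -⟩ | ⟨hq', -⟩ | ⟨hq', -⟩
        · exact hane hA
        all_goals (rw [hq] at hq'; exact absurd hq' (by simp))
      have hSpass : _ := ihS hq0
      rcases mem_PexAlph_iff.mp hPa with h | rfl | rfl
      · exact absurd h hane
      · -- a = constr eqC
        rcases Pex_tr_iff.mp hP with ⟨-, hA, -⟩ | ⟨hq, -, hp⟩ | ⟨-, hA, -⟩ |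
            ⟨hq, -, hp⟩ | ⟨hq, -, hp⟩
        · exact absurd hA (by simp [syncPair])
        · subst hq hp
          refine ⟨fun h => absurd h (by simp), fun _ => hSpass, ?_,
            fun h => absurd h (by simp)⟩
          intro _ β β' hex
          obtain ⟨γ, h1, h2⟩ := exec_append.mp hex
          obtain ⟨rfl, -⟩ := step_constr.mp (exec_singleton.mp h2)
          exact ihE (Or.inl rfl) _ _ h1
        · have : eqC = neqC := by
            have := hA
            simp only [Action.constr.injEq] at this
            exact this
          exact absurd this eqC_ne_neqC
        · subst hq hp
          refine ⟨fun h => absurd h (by simp), fun _ => hSpass, ?_,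
            fun h => absurd h (by simp)⟩
          intro _ β β' hex
          obtain ⟨γ, h1, h2⟩ := exec_append.mp hex
          obtain ⟨rfl, -⟩ := step_constr.mp (exec_singleton.mp h2)
          exact ihE (Or.inr rfl) _ _ h1
        · subst hq hp
          refine ⟨fun h => absurd h (by simp), fun _ => hSpass,
            ?_, fun _ => not_feasible_append (ihF rfl)⟩
          rintro (h | h) <;> exact absurd h (by simp)
      · -- a = constr neqC
        rcases Pex_tr_iff.mp hP with ⟨-, hA, -⟩ | ⟨-, hA, -⟩ | ⟨hq, -, hp⟩ |
            ⟨hq, -, hp⟩ | ⟨hq, -, hp⟩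
        · exact absurd hA (by simp [syncPair])
        · have : eqC = neqC := by
            have := hA
            simp only [Action.constr.injEq] at this
            exact this.symm
          exact absurd this eqC_ne_neqC
        · -- q₂ = 1, p₂ = 3 : the violation becomes infeasible
          subst hq hp
          refine ⟨fun h => absurd h (by simp), fun _ => hSpass,
            ?_, ?_⟩
          · rintro (h | h) <;> exact absurd h (by simp)
          · rintro - ⟨β, β', hex⟩
            obtain ⟨γ, h1, h2⟩ := exec_append.mp hex
            obtain ⟨-, hmem⟩ := step_constr.mp (exec_singleton.mp h2)
            exact hmem (ihE (Or.inl rfl) _ _ h1)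
        · subst hq hp
          refine ⟨fun h => absurd h (by simp), fun _ => hSpass, ?_,
            fun h => absurd h (by simp)⟩
          intro _ β β' hex
          obtain ⟨γ, h1, h2⟩ := exec_append.mp hex
          obtain ⟨-, hmem⟩ := step_constr.mp (exec_singleton.mp h2)
          exact absurd (ihE (Or.inr rfl) _ _ h1) hmem
        · subst hq hp
          refine ⟨fun h => absurd h (by simp), fun _ => hSpass,
            ?_, fun _ => not_feasible_append (ihF rfl)⟩
          rintro (h | h) <;> exact absurd h (by simp)

end Invariant
/-! ### `M₁ ‖ w ⊨ P` for balanced words -/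

theorem sat_wOf {u : List Act6} (hu : OnlyAssign u)
    (hxy : ∀ β β' : V3 → ℤ, Exec β u β' → β' V3.x = β' V3.y) :
    Sat (parallel M1ex (traceProgram (wOf u))) Pex := by
  rintro t ⟨s, hacc, hreach⟩ hfeas
  obtain ⟨-, -, -, h3⟩ := reach_inv hu hxy hreach
  obtain ⟨p, r⟩ := s
  obtain ⟨hM, hPn⟩ := hacc
  fin_cases r
  · exact hPn (Or.inl rfl)
  · exact hPn (Or.inr (Or.inl rfl))
  · exact hPn (Or.inr (Or.inr rfl))
  · exact h3 rfl hfeas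

theorem sat_nn (n : ℕ) : Sat (parallel M1ex (traceProgram (wOf (uList n n)))) Pex :=
  sat_wOf (onlyAssign_uList n n) (fun _ _ h => exec_uList_xy h)

/-! ### `M₁ ‖ w ⊭ P` for unbalanced words -/

lemma onlyAssign_exists {u : List Act6} (hu : OnlyAssign u) {a : Act6} (ha : a ∈ u) :
    ∃ x e, a = Action.assign x e := by
  rcases hu a ha with rfl | rfl | rfl | rfl
  exacts [⟨_, _, rfl⟩, ⟨_, _, rfl⟩, ⟨_, _, rfl⟩, ⟨_, _, rfl⟩]

lemma reach_assign {u : List Act6} (hu : OnlyAssign u) :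
    ∀ i (h : i ≤ u.length),
      (conj (parallel M1ex (traceProgram (wOf u))) Pex).Reach
        (Sum.inl (false, (⟨i, by rw [wOf_length]; omega⟩ : Fin ((wOf u).length + 1))), 0)
        ((wOf u).take i) := by
  intro i
  induction i with
  | zero =>
    intro _
    have e : (⟨0, by rw [wOf_length]; omega⟩ : Fin ((wOf u).length + 1)) = 0 := by
      apply Fin.ext; simp
    rw [e, List.take_zero]
    exact Program.Reach.nil
  | succ i ih =>
    intro h
    have hi : i ≤ u.length := by omega
    have hlt : i < (wOf u).length := by rw [wOf_length]; omega
    have hltu : i < u.length := by omega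
    set a := (wOf u).get ⟨i, hlt⟩ with ha
    have hauw : a ∈ u := by
      rcases wOf_get_cases hlt with ⟨hmem, -⟩ | ⟨hiu, -⟩
      · exact hmem
      · omega
    obtain ⟨x, e, hxe⟩ := onlyAssign_exists hu hauw
    have hstep : ConjTrans (parallel M1ex (traceProgram (wOf u))) Pex
        (Sum.inl (false, ⟨i, by rw [wOf_length]; omega⟩), 0) a
        (Sum.inl (false, ⟨i + 1, by rw [wOf_length]; omega⟩), 0) := by
      refine ConjTrans.left ?_ ?_ ?_
      · exact assign_mem_Par_alph (List.mem_append_left _ hauw) ⟨x, e, hxe⟩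
      · rw [hxe]; exact assign_not_mem_cInterface
      · exact ParTrans.right (show a ∈ wOf u from List.mem_append_left _ hauw)
          (by rw [hxe]; exact assign_not_mem_interface)
          ⟨hlt, rfl, rfl⟩
    have hres := Program.Reach.snoc (ih hi) hstep
    have : (wOf u).take i ++ [a] = (wOf u).take (i + 1) := by
      rw [ha, List.get_eq_getElem]
      exact List.take_concat_get' _ _ hlt
    rwa [this] at hres

lemma accepted_trace {u : List Act6} (hu : OnlyAssign u) :
    u ++ [syncPair, Action.constr neqC, Action.constr {β : V3 → ℤ | β V3.z = β V3.y}]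
      ∈ (conj (parallel M1ex (traceProgram (wOf u))) Pex).AccTraces := by
  have hlt : u.length < (wOf u).length := by rw [wOf_length]; omega
  refine ⟨(Sum.inl (true, Fin.last _), 3), ⟨⟨true, rfl, Fin.last _, rfl, rfl⟩, ?_⟩, ?_⟩
  · intro h
    simp only [Pex, Set.mem_insert_iff, Set.mem_singleton_iff] at h
    rcases h with h | h | h <;> exact absurd h (by decide)
  · have h1 := reach_assign hu u.length le_rfl
    have htake : (wOf u).take u.length = u := List.take_left' rfl
    rw [htake] at h1
    -- step 1 : the synchronized pair
    have hstep1 : ConjTrans (parallel M1ex (traceProgram (wOf u))) Pex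
        (Sum.inl (false, ⟨u.length, by rw [wOf_length]; omega⟩), 0) syncPair
        (Sum.inr (true, Fin.last _, V3.z, V3.y), 1) := by
      refine ConjTrans.sync (mem_cInterface_iff.mpr rfl) ?_
        (Pex_tr_iff.mpr (Or.inl ⟨rfl, rfl, rfl⟩))
      have hg : (wOf u).get ⟨u.length, hlt⟩ = syncM2 := by
        rw [List.get_eq_getElem]
        exact List.getElem_concat_length rfl _
      exact ParTrans.sync rfl (comm_mem_interface _) syncM2_mem_wOf
        (comm_mem_interface _) rfl ⟨rfl, rfl⟩
        ⟨hlt, hg.symm, by rw [Fin.val_last]; exact wOf_length u⟩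
    -- step 2 : P takes the violated constraint x ≠ y
    have hstep2 : ConjTrans (parallel M1ex (traceProgram (wOf u))) Pex
        (Sum.inr (true, Fin.last _, V3.z, V3.y), 1) (Action.constr neqC)
        (Sum.inr (true, Fin.last _, V3.z, V3.y), 3) :=
      ConjTrans.right (mem_PexAlph_iff.mpr (Or.inr (Or.inr rfl)))
        constr_not_mem_cInterface
        (Pex_tr_iff.mpr (Or.inr (Or.inr (Or.inl ⟨rfl, rfl, rfl⟩))))
    -- step 3 : the equality constraint of the parallel composition
    have hstep3 : ConjTrans (parallel M1ex (traceProgram (wOf u))) Pex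
        (Sum.inr (true, Fin.last _, V3.z, V3.y), 3)
        (Action.constr {β : V3 → ℤ | β V3.z = β V3.y})
        (Sum.inl (true, Fin.last _), 3) :=
      ConjTrans.left zy_constr_mem_Par_alph constr_not_mem_cInterface ParTrans.eqc
    have hres := Program.Reach.snoc (Program.Reach.snoc (Program.Reach.snoc h1 hstep1)
      hstep2) hstep3
    simpa using hres

lemma feasible_trace {m n : ℕ} (hmn : m ≠ n) :
    Feasible (uList m n ++
      [syncPair, Action.constr neqC, Action.constr {β : V3 → ℤ | β V3.z = β V3.y}]) := by
  obtain ⟨β', hU⟩ := exec_exists_uList m n (fun _ => 0)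
  obtain ⟨hx, hy⟩ := exec_uList hU
  set γ := Function.update β' V3.z (β' V3.y) with hγ
  have hγx : γ V3.x = (m : ℤ) := by rw [hγ, Function.update_of_ne (by simp), hx]
  have hγy : γ V3.y = (n : ℤ) := by rw [hγ, Function.update_of_ne (by simp), hy]
  refine ⟨fun _ => 0, γ, exec_append.mpr ⟨β', hU, ?_⟩⟩
  refine Exec.cons (β' := γ) (step_syncPair.mpr ⟨?_, ?_⟩)
    (Exec.cons (β' := γ) (step_constr.mpr ⟨rfl, ?_⟩)
      (Exec.cons (β' := γ) (step_constr.mpr ⟨rfl, ?_⟩) (Exec.nil γ)))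
  · simp [hγ]
  · intro v hv; rw [hγ, Function.update_of_ne hv]
  · show γ V3.x ≠ γ V3.y
    rw [hγx, hγy]
    exact_mod_cast hmn
  · show γ V3.z = γ V3.y
    rw [hγ]; simp
lemma not_sat {m n : ℕ} (hmn : m ≠ n) :
    ¬ Sat (parallel M1ex (traceProgram (wOf (uList m n)))) Pex := by
  intro hs
  refine hs _ ?_ (feasible_trace hmn)
  exact accepted_trace (onlyAssign_uList m n)

lemma wOf_mem_alphaM2 (m n : ℕ) : ∀ a ∈ wOf (uList m n), a ∈ alphaM2 := by
  intro a ha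
  simp only [wOf, List.mem_append, List.mem_singleton] at ha
  rcases ha with ha | rfl
  · rcases onlyAssign_uList m n a ha with rfl | rfl | rfl | rfl <;> simp [alphaM2]
  · simp [alphaM2]
/-! ### Non-regularity -/

theorem weakest_assumption_not_regular' :
    ¬ IsRegularLang {w : List Act6 | (∀ a ∈ w, a ∈ alphaM2) ∧
        Sat (parallel M1ex (traceProgram w)) Pex} := by
  rintro ⟨σ, hfin, M, hM⟩
  obtain ⟨m, n, hmn, heq⟩ := Finite.exists_ne_map_eq_of_infinite
    (fun k : ℕ => M.evalFrom M.start ([zeroX, zeroY] ++ List.replicate k incX))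
  have hsplit : ∀ k l : ℕ, wOf (uList k l) =
      ([zeroX, zeroY] ++ List.replicate k incX) ++ (List.replicate l incY ++ [syncM2]) := by
    intro k l; simp [wOf, uList]
  have hnn : wOf (uList n n) ∈ M.accepts :=
    (hM _).mpr ⟨wOf_mem_alphaM2 n n, sat_nn n⟩
  have hmn' : wOf (uList m n) ∈ M.accepts := by
    rw [DFA.mem_accepts] at hnn ⊢
    rw [hsplit n n] at hnn
    rw [hsplit m n]
    unfold DFA.eval at hnn ⊢
    rw [DFA.evalFrom_of_append] at hnn ⊢
    rw [heq]
    exact hnn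
  exact not_sat hmn ((hM _).mp hmn').2


/-- Lemma `weak_non_reg`: the weakest-assumption language
`L(A_w) = { w ∈ (αM₂)* : M₁ ‖ w ⊨ P }` of the example is not regular. -/
theorem weakest_assumption_not_regular :
    ¬ IsRegularLang {w : List Act6 | (∀ a ∈ w, a ∈ alphaM2) ∧
        Sat (parallel M1ex (traceProgram w)) Pex} := by
  exact weakest_assumption_not_regular'

end AGR
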